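/- For k ≥ 1 and m₂ ≥ 1, the subalgebras ℚ[x₁, x₂, (1+x₂^k)/x₁, (1+x₁^k)^{m₂}/x₂] and ℚ[x₁, x₂, (1+x₂^k)/x₁, (x₁^k + (1+x₂^k)^k)^{m₂}/(x₁^{m₂ k} x₂)] of ℚ(x₁,x₂) are equal. -/

import Mathlib

set_option maxHeartbeats 2000000

noncomputable abbrev K : Type := FractionRing (MvPolynomial (Fin 2) ℚ)
noncomputable abbrev x1 : K := algebraMap (MvPolynomial (Fin 2) ℚ) K (MvPolynomial.X 0)
noncomputable abbrev x2 : K := algebraMap (MvPolynomial (Fin 2) ℚ) K (MvPolynomial.X 1)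

/-- for k ≥ 1 and m₂ ≥ 1 the subalgebras
ℚ[x₁, x₂, (1+x₂^k)/x₁, (1+x₁^k)^m₂/x₂] and
ℚ[x₁, x₂, (1+x₂^k)/x₁, (x₁^k + (1+x₂^k)^k)^m₂/(x₁^{m₂k} x₂)] of ℚ(x₁,x₂) are equal. -/
theorem stmt_13 (k m₂ : ℕ) (hk : 1 ≤ k) (hm : 1 ≤ m₂) :
    Algebra.adjoin ℚ ({x1, x2, (1 + x2 ^ k) / x1, (1 + x1 ^ k) ^ m₂ / x2} : Set K)
      = Algebra.adjoin ℚ ({x1, x2, (1 + x2 ^ k) / x1,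
          (x1 ^ k + (1 + x2 ^ k) ^ k) ^ m₂ / (x1 ^ (m₂ * k) * x2)} : Set K) := by
  have hinj : Function.Injective (algebraMap (MvPolynomial (Fin 2) ℚ) K) :=
    IsFractionRing.injective _ _
  have hx1 : x1 ≠ 0 := by simpa using hinj.ne (MvPolynomial.X_ne_zero (R := ℚ) 0)
  have hx2 : x2 ≠ 0 := by simpa using hinj.ne (MvPolynomial.X_ne_zero (R := ℚ) 1)
  obtain ⟨m, rfl⟩ : ∃ m, m₂ = m + 1 := ⟨m₂ - 1, by omega⟩
  obtain ⟨l, rfl⟩ : ∃ l, k = l + 1 := ⟨k - 1, by omega⟩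
  clear hk hm
  -- the auxiliary polynomial g with x2 * g = (1+x2^k)^k - 1
  set g : K := x2 ^ l * ∑ i ∈ Finset.range (l + 1), (1 + x2 ^ (l + 1)) ^ i with hgdef
  have hx2g : x2 * g = (1 + x2 ^ (l + 1)) ^ (l + 1) - 1 := by
    have h := geom_sum_mul (1 + x2 ^ (l + 1)) (l + 1)
    rw [hgdef]
    linear_combination h + (∑ i ∈ Finset.range (l + 1), (1 + x2 ^ (l + 1)) ^ i) *
      (pow_succ' x2 l).symm
  have hgmem : ∀ (S : Subalgebra ℚ K), x2 ∈ S → g ∈ S := by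
    intro S h2
    rw [hgdef]
    exact mul_mem (pow_mem h2 l)
      (sum_mem fun i _ => pow_mem (add_mem (one_mem S) (pow_mem h2 _)) i)
  -- abbreviations (as plain terms)
  -- first key identity: u in terms of v
  have hu_eq : (1 + x1 ^ (l + 1)) ^ (m + 1) / x2 =
      x1 ^ ((m + 1) * (l + 1)) *
        ((x1 ^ (l + 1) + (1 + x2 ^ (l + 1)) ^ (l + 1)) ^ (m + 1) /
          (x1 ^ ((m + 1) * (l + 1)) * x2))
        - g * ∑ i ∈ Finset.range (m + 1),
            (x1 ^ (l + 1) + (1 + x2 ^ (l + 1)) ^ (l + 1)) ^ i *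
              (1 + x1 ^ (l + 1)) ^ (m - i) := by
    have h₁ := geom_sum₂_mul (x1 ^ (l + 1) + (1 + x2 ^ (l + 1)) ^ (l + 1))
      (1 + x1 ^ (l + 1)) (m + 1)
    simp only [Nat.add_sub_cancel] at h₁
    rw [mul_div_assoc', mul_div_mul_left _ _ (pow_ne_zero ((m + 1) * (l + 1)) hx1), eq_sub_iff_add_eq,
      div_add' _ _ _ hx2, div_left_inj' hx2]
    linear_combination h₁ + (∑ i ∈ Finset.range (m + 1), (x1 ^ (l + 1) + (1 + x2 ^ (l + 1)) ^ (l + 1)) ^ i *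
        (1 + x1 ^ (l + 1)) ^ (m - i)) * hx2g
  -- second key identity: v in terms of u
  have hv_eq : (x1 ^ (l + 1) + (1 + x2 ^ (l + 1)) ^ (l + 1)) ^ (m + 1) /
        (x1 ^ ((m + 1) * (l + 1)) * x2) =
      ((1 + x2 ^ (l + 1)) / x1) ^ ((l + 1) * (m + 1)) * ((1 + x1 ^ (l + 1)) ^ (m + 1) / x2)
        - g * ∑ i ∈ Finset.range (m + 1),
            (1 + ((1 + x2 ^ (l + 1)) / x1) ^ (l + 1)) ^ i *
              (((1 + x2 ^ (l + 1)) / x1) ^ (l + 1) * (1 + x1 ^ (l + 1))) ^ (m - i) := by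
    have hrel : x1 ^ ((l + 1) * m) * ∑ i ∈ Finset.range (m + 1),
          (1 + ((1 + x2 ^ (l + 1)) / x1) ^ (l + 1)) ^ i *
            (((1 + x2 ^ (l + 1)) / x1) ^ (l + 1) * (1 + x1 ^ (l + 1))) ^ (m - i)
        = ∑ i ∈ Finset.range (m + 1),
            (x1 ^ (l + 1) + (1 + x2 ^ (l + 1)) ^ (l + 1)) ^ i *
              ((1 + x2 ^ (l + 1)) ^ (l + 1) * (1 + x1 ^ (l + 1))) ^ (m - i) := by
      rw [Finset.mul_sum]
      refine Finset.sum_congr rfl fun i hi => ?_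
      have hi' : i ≤ m := by simpa [Nat.lt_succ_iff] using hi
      have hsplit : (l + 1) * m = (l + 1) * i + (l + 1) * (m - i) := by
        rw [← Nat.mul_add, Nat.add_sub_cancel' hi']
      have e1 : x1 ^ ((l + 1) * i) * (1 + ((1 + x2 ^ (l + 1)) / x1) ^ (l + 1)) ^ i
          = (x1 ^ (l + 1) + (1 + x2 ^ (l + 1)) ^ (l + 1)) ^ i := by
        rw [pow_mul, ← mul_pow]
        congr 1
        rw [div_pow, mul_add, mul_one, mul_div_assoc', mul_div_cancel_left₀ _ (pow_ne_zero _ hx1)]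
      have e2 : x1 ^ ((l + 1) * (m - i)) *
            (((1 + x2 ^ (l + 1)) / x1) ^ (l + 1) * (1 + x1 ^ (l + 1))) ^ (m - i)
          = ((1 + x2 ^ (l + 1)) ^ (l + 1) * (1 + x1 ^ (l + 1))) ^ (m - i) := by
        rw [pow_mul, ← mul_pow]
        congr 1
        rw [div_pow, ← mul_assoc, mul_div_assoc', mul_div_cancel_left₀ _ (pow_ne_zero _ hx1)]
      rw [hsplit, pow_add, mul_mul_mul_comm, e1, e2]
    set S₂ : K := ∑ i ∈ Finset.range (m + 1),
        (1 + ((1 + x2 ^ (l + 1)) / x1) ^ (l + 1)) ^ i *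
          (((1 + x2 ^ (l + 1)) / x1) ^ (l + 1) * (1 + x1 ^ (l + 1))) ^ (m - i)
      with hS₂def
    set S₂p : K := ∑ i ∈ Finset.range (m + 1),
        (x1 ^ (l + 1) + (1 + x2 ^ (l + 1)) ^ (l + 1)) ^ i *
          ((1 + x2 ^ (l + 1)) ^ (l + 1) * (1 + x1 ^ (l + 1))) ^ (m - i) with hS₂pdef
    have h₂ := geom_sum₂_mul (x1 ^ (l + 1) + (1 + x2 ^ (l + 1)) ^ (l + 1))
      ((1 + x2 ^ (l + 1)) ^ (l + 1) * (1 + x1 ^ (l + 1))) (m + 1)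
    simp only [Nat.add_sub_cancel] at h₂
    rw [← hS₂pdef] at h₂
    have hX : x1 ^ ((m + 1) * (l + 1)) ≠ 0 := pow_ne_zero _ hx1
    rw [div_eq_iff (mul_ne_zero hX hx2)]
    have hy : ((1 + x2 ^ (l + 1)) / x1) ^ ((l + 1) * (m + 1)) * x1 ^ ((m + 1) * (l + 1))
        = (1 + x2 ^ (l + 1)) ^ ((l + 1) * (m + 1)) := by
      rw [div_pow, Nat.mul_comm (m + 1) (l + 1)]
      exact div_mul_cancel₀ _ (pow_ne_zero _ hx1)
    have hS : S₂ * x1 ^ ((m + 1) * (l + 1)) = x1 ^ (l + 1) * S₂p := by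
      linear_combination x1 ^ (l + 1) * hrel
    have hBC : ((1 + x2 ^ (l + 1)) ^ (l + 1) * (1 + x1 ^ (l + 1))) ^ (m + 1)
        = (1 + x2 ^ (l + 1)) ^ ((l + 1) * (m + 1)) * (1 + x1 ^ (l + 1)) ^ (m + 1) := by
      rw [mul_pow, ← pow_mul]
    have hB2 : (1 + x1 ^ (l + 1)) ^ (m + 1) / x2 * x2 = (1 + x1 ^ (l + 1)) ^ (m + 1) :=
      div_mul_cancel₀ _ hx2
    linear_combination (-1 : K) * h₂
      - ((1 + x1 ^ (l + 1)) ^ (m + 1) / x2 * x2) * hy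
      - (1 + x2 ^ (l + 1)) ^ ((l + 1) * (m + 1)) * hB2
      + g * x2 * hS
      + x1 ^ (l + 1) * S₂p * hx2g
      + hBC
  -- now prove the equality of the two adjoins
  apply le_antisymm
  · rw [Algebra.adjoin_le_iff]
    rintro z hz
    have h1 : x1 ∈ Algebra.adjoin ℚ ({x1, x2, (1 + x2 ^ (l + 1)) / x1,
        (x1 ^ (l + 1) + (1 + x2 ^ (l + 1)) ^ (l + 1)) ^ (m + 1) /
          (x1 ^ ((m + 1) * (l + 1)) * x2)} : Set K) :=
      Algebra.subset_adjoin (Set.mem_insert _ _)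
    have h2 : x2 ∈ Algebra.adjoin ℚ ({x1, x2, (1 + x2 ^ (l + 1)) / x1,
        (x1 ^ (l + 1) + (1 + x2 ^ (l + 1)) ^ (l + 1)) ^ (m + 1) /
          (x1 ^ ((m + 1) * (l + 1)) * x2)} : Set K) :=
      Algebra.subset_adjoin (Set.mem_insert_of_mem _ (Set.mem_insert _ _))
    have hv : (x1 ^ (l + 1) + (1 + x2 ^ (l + 1)) ^ (l + 1)) ^ (m + 1) /
          (x1 ^ ((m + 1) * (l + 1)) * x2) ∈ Algebra.adjoin ℚ ({x1, x2,
        (1 + x2 ^ (l + 1)) / x1,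
        (x1 ^ (l + 1) + (1 + x2 ^ (l + 1)) ^ (l + 1)) ^ (m + 1) /
          (x1 ^ ((m + 1) * (l + 1)) * x2)} : Set K) :=
      Algebra.subset_adjoin (Set.mem_insert_of_mem _ (Set.mem_insert_of_mem _
        (Set.mem_insert_of_mem _ rfl)))
    simp only [Set.mem_insert_iff, Set.mem_singleton_iff] at hz
    obtain rfl | rfl | rfl | rfl := hz
    · exact h1
    · exact h2
    · exact Algebra.subset_adjoin (Set.mem_insert_of_mem _ (Set.mem_insert_of_mem _
        (Set.mem_insert _ _)))
    · rw [hu_eq]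
      refine sub_mem (mul_mem (pow_mem h1 _) hv) (mul_mem (hgmem _ h2) (sum_mem fun i _ => ?_))
      exact mul_mem
        (pow_mem (add_mem (pow_mem h1 _) (pow_mem (add_mem (one_mem _) (pow_mem h2 _)) _)) _)
        (pow_mem (add_mem (one_mem _) (pow_mem h1 _)) _)
  · rw [Algebra.adjoin_le_iff]
    rintro z hz
    have h1 : x1 ∈ Algebra.adjoin ℚ ({x1, x2, (1 + x2 ^ (l + 1)) / x1,
        (1 + x1 ^ (l + 1)) ^ (m + 1) / x2} : Set K) :=
      Algebra.subset_adjoin (Set.mem_insert _ _)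
    have h2 : x2 ∈ Algebra.adjoin ℚ ({x1, x2, (1 + x2 ^ (l + 1)) / x1,
        (1 + x1 ^ (l + 1)) ^ (m + 1) / x2} : Set K) :=
      Algebra.subset_adjoin (Set.mem_insert_of_mem _ (Set.mem_insert _ _))
    have hy : (1 + x2 ^ (l + 1)) / x1 ∈ Algebra.adjoin ℚ ({x1, x2,
        (1 + x2 ^ (l + 1)) / x1, (1 + x1 ^ (l + 1)) ^ (m + 1) / x2} : Set K) :=
      Algebra.subset_adjoin (Set.mem_insert_of_mem _ (Set.mem_insert_of_mem _
        (Set.mem_insert _ _)))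
    have hu : (1 + x1 ^ (l + 1)) ^ (m + 1) / x2 ∈ Algebra.adjoin ℚ ({x1, x2,
        (1 + x2 ^ (l + 1)) / x1, (1 + x1 ^ (l + 1)) ^ (m + 1) / x2} : Set K) :=
      Algebra.subset_adjoin (Set.mem_insert_of_mem _ (Set.mem_insert_of_mem _
        (Set.mem_insert_of_mem _ rfl)))
    simp only [Set.mem_insert_iff, Set.mem_singleton_iff] at hz
    obtain rfl | rfl | rfl | rfl := hz
    · exact h1
    · exact h2
    · exact hy
    · rw [hv_eq]
      refine sub_mem (mul_mem (pow_mem hy _) hu) (mul_mem (hgmem _ h2) (sum_mem fun i _ => ?_))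
      exact mul_mem
        (pow_mem (add_mem (one_mem _) (pow_mem hy _)) _)
        (pow_mem (mul_mem (pow_mem hy _) (add_mem (one_mem _) (pow_mem h1 _))) _)
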